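/- arXiv:1712.07161 — 3 statements merged into one kernel-verified Lean document; each statement's English description precedes it below -/
import Mathlib

section
/- Let H be a binary (n−k)×n parity-check matrix such that every set of 2L columns of H is linearly independent over GF(2). Interpreting entries of H as complex numbers, the linear map q ↦ Hq from ℂⁿ to ℂ^{n−k} is injective on the set of vectors with at most L nonzero entries: if q₁ and q₂ each have at most L nonzero components and Hq₁ = Hq₂, then q₁ = q₂. -/
lemma key_lift {m : ℕ} {ι : Type*} [Fintype ι] [DecidableEq ι]
    (A : Matrix (Fin m) ι (ZMod 2))
    (h : LinearIndependent (ZMod 2) (fun j => fun i => A i j)) :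
    LinearIndependent ℂ (fun j => fun i : Fin m => ((A i j).val : ℂ)) := by
  have hker : LinearMap.ker A.mulVecLin = ⊥ := by
    rw [LinearMap.ker_eq_bot']
    intro g hg
    rw [Fintype.linearIndependent_iff] at h
    refine funext (h g ?_)
    funext i
    have := congrFun hg i
    simpa [Matrix.mulVec, dotProduct, Finset.sum_apply, mul_comm] using this
  obtain ⟨gL, hgL⟩ := LinearMap.exists_leftInverse_of_injective A.mulVecLin hker
  set B : Matrix ι (Fin m) (ZMod 2) := LinearMap.toMatrix' gL with hB
  have hBA : B * A = 1 := by
    have h2 : LinearMap.toMatrix' (gL.comp A.mulVecLin)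
        = LinearMap.toMatrix' (LinearMap.id (R := ZMod 2) (M := ι → ZMod 2)) := by rw [hgL]
    rw [← Matrix.toLin'_apply'] at h2
    rwa [LinearMap.toMatrix'_comp, LinearMap.toMatrix'_toLin', LinearMap.toMatrix'_id] at h2
  -- integer lifts
  set AZ : Matrix (Fin m) ι ℤ := fun i j => ((A i j).val : ℤ) with hAZ
  set BZ : Matrix ι (Fin m) ℤ := fun i j => ((B i j).val : ℤ) with hBZ
  have hmapA : AZ.map ⇑(Int.castRingHom (ZMod 2)) = A := by
    funext i j; rw [Matrix.map_apply]; simp [hAZ, ZMod.natCast_val, ZMod.cast_id]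
  have hmapB : BZ.map ⇑(Int.castRingHom (ZMod 2)) = B := by
    funext i j; rw [Matrix.map_apply]; simp [hBZ, ZMod.natCast_val, ZMod.cast_id]
  have hdet : (Int.castRingHom (ZMod 2)) (BZ * AZ).det = 1 := by
    rw [RingHom.map_det, RingHom.mapMatrix_apply, Matrix.map_mul, hmapA, hmapB, hBA, Matrix.det_one]
  have hdetZ : (BZ * AZ).det ≠ 0 := by
    intro h0; rw [h0] at hdet; simp at hdet
  -- over ℂ
  set AC : Matrix (Fin m) ι ℂ := AZ.map ⇑(Int.castRingHom ℂ) with hAC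
  set BC : Matrix ι (Fin m) ℂ := BZ.map ⇑(Int.castRingHom ℂ) with hBC
  have hdetC : (BC * AC).det ≠ 0 := by
    rw [hAC, hBC, ← Matrix.map_mul, ← RingHom.mapMatrix_apply, ← RingHom.map_det]
    simpa using hdetZ
  have hunit : IsUnit (BC * AC) := (Matrix.isUnit_iff_isUnit_det _).2 (isUnit_iff_ne_zero.mpr hdetC)
  have hinj : Function.Injective (BC * AC).mulVec := Matrix.mulVec_injective_iff_isUnit.2 hunit
  rw [Fintype.linearIndependent_iff]
  intro g hg j
  have hACg : AC.mulVec g = 0 := by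
    funext i
    have := congrFun hg i
    simp only [hAC, Matrix.mulVec, dotProduct, Matrix.map_apply]
    simpa [hAC, hAZ, Matrix.mulVec, dotProduct, Matrix.map_apply, Finset.sum_apply,
      mul_comm] using this
  have : (BC * AC).mulVec g = (BC * AC).mulVec 0 := by
    rw [← Matrix.mulVec_mulVec, hACg, Matrix.mulVec_zero, Matrix.mulVec_zero]
  have := hinj this
  exact congrFun this j

/-- If every set of at most `2L` columns of the `{0,1}`-matrix `H` is linearly independent
over `GF(2)`, then the complex map `q ↦ Hq` is injective on `L`-sparse complex vectors. -/
theorem stmt6 (m n L : ℕ) (H : Matrix (Fin m) (Fin n) (ZMod 2))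
    (hcols : ∀ s : Finset (Fin n), s.card ≤ 2 * L →
      LinearIndependent (ZMod 2) (fun j : {x // x ∈ s} => fun i => H i j.1))
    (q₁ q₂ : Fin n → ℂ)
    (h₁ : {i | q₁ i ≠ 0}.ncard ≤ L) (h₂ : {i | q₂ i ≠ 0}.ncard ≤ L)
    (heq : (H.map (fun x => (x.val : ℂ))).mulVec q₁ =
           (H.map (fun x => (x.val : ℂ))).mulVec q₂) :
    q₁ = q₂ := by
  classical
  set s : Finset (Fin n) := Finset.univ.filter (fun i => q₁ i - q₂ i ≠ 0) with hs
  have hcard : s.card ≤ 2 * L := by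
    have hsub : s ⊆ {i | q₁ i ≠ 0}.toFinset ∪ {i | q₂ i ≠ 0}.toFinset := by
      intro i hi
      rw [hs, Finset.mem_filter] at hi
      by_contra hcon
      rw [Finset.mem_union, Set.mem_toFinset, Set.mem_toFinset] at hcon
      push_neg at hcon
      simp only [Set.mem_setOf_eq, not_not] at hcon
      exact hi.2 (by rw [hcon.1, hcon.2, sub_self])
    calc s.card ≤ ({i | q₁ i ≠ 0}.toFinset ∪ {i | q₂ i ≠ 0}.toFinset).card :=
          Finset.card_le_card hsub
      _ ≤ {i | q₁ i ≠ 0}.toFinset.card + {i | q₂ i ≠ 0}.toFinset.card :=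
          Finset.card_union_le _ _
      _ ≤ L + L := by
          have e₁ : {i | q₁ i ≠ 0}.toFinset.card = {i | q₁ i ≠ 0}.ncard :=
            (Set.ncard_eq_toFinset_card' _).symm
          have e₂ : {i | q₂ i ≠ 0}.toFinset.card = {i | q₂ i ≠ 0}.ncard :=
            (Set.ncard_eq_toFinset_card' _).symm
          omega
      _ = 2 * L := by ring
  have hC := key_lift (fun i (j : {x // x ∈ s}) => H i j.1) (hcols s hcard)
  rw [Fintype.linearIndependent_iff] at hC
  have hzero : ∀ j : {x // x ∈ s}, q₁ j.1 - q₂ j.1 = 0 := by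
    refine fun j => congrFun (funext (hC (fun j => q₁ j.1 - q₂ j.1) ?_)) j
    funext i
    have h0 : ∑ j, ((H i j).val : ℂ) * (q₁ j - q₂ j) = 0 := by
      have h := congrFun heq i
      simp only [Matrix.mulVec, dotProduct, Matrix.map_apply] at h
      simp only [mul_sub, Finset.sum_sub_distrib, h, sub_self]
    have h1 : ∑ j ∈ s, ((H i j).val : ℂ) * (q₁ j - q₂ j) = 0 := by
      rw [← h0]
      refine Finset.sum_subset (Finset.subset_univ s) ?_
      intro j _ hj
      rw [hs, Finset.mem_filter] at hj
      push_neg at hj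
      rw [hj (Finset.mem_univ j), mul_zero]
    have h2 : ∑ j ∈ s.attach, ((H i j.1).val : ℂ) * (q₁ j.1 - q₂ j.1) = 0 := by
      rw [Finset.sum_attach s (fun j => ((H i j).val : ℂ) * (q₁ j - q₂ j))]
      exact h1
    simpa [Finset.sum_apply, smul_eq_mul, mul_comm] using h2
  funext i
  by_cases hi : i ∈ s
  · exact sub_eq_zero.mp (hzero ⟨i, hi⟩)
  · rw [hs, Finset.mem_filter] at hi
    push_neg at hi
    exact sub_eq_zero.mp (hi (Finset.mem_univ i))
end

section
/- Let H be a {0,1}-matrix of size m×n such that every set of L columns of H is linearly independent over GF(2). Then, viewing H over ℂ, for any vector q ∈ ℂⁿ with at most L nonzero entries, Hq = 0 implies q = 0. -/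
/-- If every set of at most `L` columns of the `{0,1}`-matrix `H` is linearly independent
over `GF(2)`, then for any `L`-sparse complex vector `q`, `Hq = 0` (over `ℂ`) implies
`q = 0`. -/
theorem stmt7 (m n L : ℕ) (H : Matrix (Fin m) (Fin n) (ZMod 2))
    (hcols : ∀ s : Finset (Fin n), s.card ≤ L →
      LinearIndependent (ZMod 2) (fun j : {x // x ∈ s} => fun i => H i j.1))
    (q : Fin n → ℂ) (hq : {i | q i ≠ 0}.ncard ≤ L)
    (h0 : (H.map (fun x => (x.val : ℂ))).mulVec q = 0) :
    q = 0 := by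
  classical
  have hfin : {i | q i ≠ 0}.Finite := Set.toFinite _
  set s : Finset (Fin n) := hfin.toFinset with hs
  have hmem : ∀ j, j ∈ s ↔ q j ≠ 0 := fun j => hfin.mem_toFinset
  have hcard : s.card ≤ L := by
    rwa [Set.ncard_eq_toFinset_card _ hfin] at hq
  have hli := hcols s hcard
  set α := {x // x ∈ s}
  -- matrix with columns indexed by s
  set B : Matrix (Fin m) α (ZMod 2) := Matrix.of (fun i j => H i j.1) with hB
  have hBt : LinearIndependent (ZMod 2) B.transpose := hli
  -- rank computations
  have hrank1 : B.rank = Fintype.card α := by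
    rw [Matrix.rank_eq_finrank_span_cols]
    exact (linearIndependent_iff_card_eq_finrank_span.mp hBt).symm
  have hrank2 : Set.finrank (ZMod 2) (Set.range B) = Fintype.card α := by
    rw [Set.finrank]
    exact (Matrix.rank_eq_finrank_span_row B).symm.trans hrank1
  -- extract independent rows
  obtain ⟨t, hts, hspan, htind⟩ := exists_linearIndependent (ZMod 2) (Set.range B)
  have htfin : t.Finite := (Set.finite_range B).subset hts
  haveI : Fintype t := htfin.fintype
  have hcardt : Fintype.card t = Fintype.card α := by
    have h1 : Module.finrank (ZMod 2) (Submodule.span (ZMod 2) t) = t.toFinset.card :=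
      finrank_span_set_eq_card htind
    rw [Set.toFinset_card] at h1
    rw [← h1, hspan]
    exact hrank2
  -- choose row indices
  have hchoice : ∀ x : t, ∃ i : Fin m, B i = (x : α → ZMod 2) := fun x => hts x.2
  choose g hg using hchoice
  have e : t ≃ α := Fintype.equivOfCardEq hcardt
  -- the square ZMod 2 matrix
  set M : Matrix α α (ZMod 2) := Matrix.of (fun i j => H (g (e.symm i)) j.1) with hM
  have hMrows : LinearIndependent (ZMod 2) (fun i => M i) := by
    have : (fun i : α => M i) = (fun x : t => (x : α → ZMod 2)) ∘ e.symm := by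
      funext i
      exact hg (e.symm i)
    rw [this]
    exact htind.comp e.symm e.symm.injective
  have hMunit : IsUnit M :=
    Matrix.vecMul_injective_iff_isUnit.mp (Matrix.vecMul_injective_iff.mpr hMrows)
  have hMdet : M.det ≠ 0 := (Matrix.isUnit_iff_isUnit_det M).mp hMunit |>.ne_zero
  -- integer matrix
  set A : Matrix α α ℤ := Matrix.of (fun i j => ((H (g (e.symm i)) j.1).val : ℤ)) with hA
  have hmap : A.map (Int.cast : ℤ → ZMod 2) = M := by
    ext i j
    simp [hA, hM, ZMod.natCast_val, ZMod.cast_id]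
  have hAdet : A.det ≠ 0 := by
    intro h
    apply hMdet
    rw [← hmap]
    have := (Int.castRingHom (ZMod 2)).map_det A
    simp only [RingHom.mapMatrix_apply, Int.coe_castRingHom] at this
    rw [← this, h]
    simp
  -- complex matrix
  set Ac : Matrix α α ℂ := Matrix.of (fun i j => ((H (g (e.symm i)) j.1).val : ℂ)) with hAc
  have hmapc : A.map (Int.cast : ℤ → ℂ) = Ac := by
    ext i j
    simp [hA, hAc]
  have hAcdet : Ac.det ≠ 0 := by
    rw [← hmapc]
    have := (Int.castRingHom ℂ).map_det A
    simp only [RingHom.mapMatrix_apply, Int.coe_castRingHom] at this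
    rw [← this]
    simpa using hAdet
  have hinj : Function.Injective Ac.mulVec :=
    Matrix.mulVec_injective_iff_isUnit.mpr ((Matrix.isUnit_iff_isUnit_det Ac).mpr hAcdet.isUnit)
  -- the restricted vector
  set c : α → ℂ := fun j => q j.1 with hc
  have hzero : Ac.mulVec c = 0 := by
    funext i
    have h0i := congrFun h0 (g (e.symm i))
    simp only [Matrix.mulVec, dotProduct, Matrix.map_apply, Pi.zero_apply] at h0i ⊢
    rw [← Finset.sum_subset (Finset.subset_univ s)
      (fun j _ hj => by simp [(not_not.mp (fun h => hj ((hmem j).mpr h)))])] at h0i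
    rw [← Finset.sum_attach s (fun j => ((H (g (e.symm i)) j).val : ℂ) * q j)] at h0i
    convert h0i using 1
    simp only [hAc, hc, Matrix.of_apply]
    exact Finset.sum_congr (Finset.univ_eq_attach s) (fun _ _ => rfl)
  have hc0 : c = 0 := hinj (by simpa using hzero)
  funext j
  by_cases hj : j ∈ s
  · exact congrFun hc0 ⟨j, hj⟩
  · by_contra h
    exact hj ((hmem j).mpr h)
end

section
/- Let H be an m×n matrix over GF(2) whose columns are pairwise distinct and all nonzero. Then, interpreting entries of H as complex numbers, the map q ↦ Hq is injective on the set of complex vectors with at most one nonzero entry. -/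
lemma castZ (x : ZMod 2) : (x.val : ℂ) = 0 ↔ x = 0 := by
  constructor
  · intro h
    have : x.val = 0 := by exact_mod_cast h
    exact (ZMod.val_eq_zero x).mp this
  · intro h; simp [h]

lemma sparse_struct (n : ℕ) (q : Fin n → ℂ) (h : {i | q i ≠ 0}.ncard ≤ 1) :
    q = 0 ∨ ∃ j c, c ≠ 0 ∧ q = fun k => if k = j then c else 0 := by
  by_cases hq : q = 0
  · exact Or.inl hq
  · right
    obtain ⟨j, hj⟩ : ∃ j, q j ≠ 0 := by
      by_contra hc; push_neg at hc; exact hq (funext fun i => hc i)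
    refine ⟨j, q j, hj, funext fun k => ?_⟩
    by_cases hk : k = j
    · simp [hk]
    · simp only [if_neg hk]
      by_contra hqk
      have hfin : {i | q i ≠ 0}.Finite := Set.toFinite _
      have := (Set.ncard_le_one hfin).mp h k hqk j hj
      exact hk this

lemma mv_single (m n : ℕ) (H : Matrix (Fin m) (Fin n) (ZMod 2)) (j : Fin n) (c : ℂ)
    (i : Fin m) :
    (H.map (fun x => (x.val : ℂ))).mulVec (fun k => if k = j then c else 0) i
      = (H i j).val * c := by
  simp [Matrix.mulVec, dotProduct, Matrix.map, mul_ite, Finset.sum_ite_eq']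

/-- If the columns of a `GF(2)` matrix `H` are pairwise distinct and nonzero, then,
interpreting entries as complex numbers, `q ↦ Hq` is injective on `1`-sparse complex
vectors. -/
theorem stmt10 (m n : ℕ) (H : Matrix (Fin m) (Fin n) (ZMod 2))
    (hinj : Function.Injective (fun j : Fin n => fun i => H i j))
    (hnz : ∀ j : Fin n, (fun i => H i j) ≠ 0)
    (q₁ q₂ : Fin n → ℂ)
    (h₁ : {i | q₁ i ≠ 0}.ncard ≤ 1) (h₂ : {i | q₂ i ≠ 0}.ncard ≤ 1)
    (heq : (H.map (fun x => (x.val : ℂ))).mulVec q₁ =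
           (H.map (fun x => (x.val : ℂ))).mulVec q₂) :
    q₁ = q₂ := by
  have col_nz : ∀ j : Fin n, ∃ i, H i j ≠ 0 := by
    intro j
    by_contra hc; push_neg at hc
    exact hnz j (funext fun i => hc i)
  rcases sparse_struct n q₁ h₁ with rfl | ⟨j₁, c₁, hc₁, rfl⟩
  · rcases sparse_struct n q₂ h₂ with rfl | ⟨j₂, c₂, hc₂, rfl⟩
    · rfl
    · exfalso
      obtain ⟨i, hi⟩ := col_nz j₂
      have := congrFun heq i
      rw [mv_single] at this
      simp [Matrix.mulVec_zero] at this
      rcases this with h | h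
      · exact hi ((castZ _).mp h)
      · exact hc₂ h
  · rcases sparse_struct n q₂ h₂ with rfl | ⟨j₂, c₂, hc₂, rfl⟩
    · exfalso
      obtain ⟨i, hi⟩ := col_nz j₁
      have := congrFun heq i
      rw [mv_single] at this
      simp [Matrix.mulVec_zero] at this
      rcases this with h | h
      · exact hi ((castZ _).mp h)
      · exact hc₁ h
    · by_cases hjj : j₁ = j₂
      · subst hjj
        obtain ⟨i, hi⟩ := col_nz j₁
        have := congrFun heq i
        rw [mv_single, mv_single] at this
        have hv : ((H i j₁).val : ℂ) ≠ 0 := fun h => hi ((castZ _).mp h)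
        have : c₁ = c₂ := mul_left_cancel₀ hv this
        rw [this]
      · exfalso
        have hcols : (fun i => H i j₁) ≠ (fun i => H i j₂) := fun h => hjj (hinj h)
        obtain ⟨i, hi⟩ : ∃ i, H i j₁ ≠ H i j₂ := by
          by_contra hc; push_neg at hc; exact hcols (funext hc)
        have key := congrFun heq i
        rw [mv_single, mv_single] at key
        -- H i j₁ and H i j₂ are in ZMod 2: one is 0, other is 1
        rcases (by decide : ∀ a b : ZMod 2, a ≠ b → (a = 0 ∧ b = 1) ∨ (a = 1 ∧ b = 0)) _ _ hi with ⟨h1, h2⟩ | ⟨h1, h2⟩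
        all_goals {
          rw [h1, h2] at key
          rw [show ((0:ZMod 2).val : ℂ) = 0 by norm_num [ZMod.val_zero],
              show ((1:ZMod 2).val : ℂ) = 1 by norm_num [ZMod.val_one]] at key
          simp at key
          first
          | exact hc₂ key.symm
          | exact hc₁ key }
end
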